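/- Let x ∈ ℝ_{≥0}^E have dyadic rational entries x_e = Σ_{i=0}^{L} (x_e)_i·2^{−i}, let E_i := supp_i(x) for 0 ≤ i ≤ L, let F_L := ∅, and let F_0, …, F_{L−1} ⊆ E satisfy |F_{i−1}| ≤ ⌈(|E_i| + |F_i|)/2⌉ for every 1 ≤ i ≤ L. Then |F_i| ≤ ⌈2^{i} · Σ_{j=i+1}^{L} |E_j|·2^{−j}⌉ ≤ 1 + 2^{i}·‖x‖ for every 0 ≤ i ≤ L. -/

import Mathlib

open Finset

variable {V : Type*} [Fintype V] [DecidableEq V]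

/-- `‖x‖ := Σ_e x_e`. -/
noncomputable def vnorm (x : Sym2 V → ℝ) : ℝ :=
  ∑ e : Sym2 V, x e

/-- Let `x ∈ ℝ_{≥0}^E` have dyadic entries `x_e = Σ_{i=0}^{L} (x_e)_i·2^{−i}`, let
`E_i := supp_i(x)`, `F_L := ∅`, and let `F_0, …, F_{L−1}` satisfy
`|F_{i−1}| ≤ ⌈(|E_i| + |F_i|)/2⌉` for every `1 ≤ i ≤ L`.  Then
`|F_i| ≤ ⌈2^{i} · Σ_{j=i+1}^{L} |E_j|·2^{−j}⌉ ≤ 1 + 2^{i}·‖x‖` for every `0 ≤ i ≤ L`. -/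
theorem stmt_9 (x : Sym2 V → ℝ) (L : ℕ) (d : Sym2 V → ℕ → ℕ)
    (hd : ∀ e i, d e i ≤ 1)
    (hx : ∀ e, x e = ∑ i ∈ Finset.range (L + 1), (d e i : ℝ) / 2 ^ i)
    (E F : ℕ → Finset (Sym2 V))
    (hE : ∀ i, E i = Finset.univ.filter (fun e => d e i = 1))
    (hFL : F L = ∅)
    (hF : ∀ i, 1 ≤ i → i ≤ L → (F (i - 1)).card ≤ ((E i).card + (F i).card + 1) / 2) :
    ∀ i ≤ L,
      ((F i).card : ℝ) ≤
        ((⌈(2 : ℝ) ^ i * ∑ j ∈ Finset.Icc (i + 1) L, ((E j).card : ℝ) / 2 ^ j⌉ : ℤ) : ℝ) ∧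
      ((⌈(2 : ℝ) ^ i * ∑ j ∈ Finset.Icc (i + 1) L, ((E j).card : ℝ) / 2 ^ j⌉ : ℤ) : ℝ) ≤
        1 + 2 ^ i * vnorm x := by
  classical
  set S : ℕ → ℝ := fun i => ∑ j ∈ Finset.Icc (i + 1) L, ((E j).card : ℝ) / 2 ^ j with hS
  have hSnonneg : ∀ i, 0 ≤ S i := fun i => Finset.sum_nonneg fun j _ => by positivity
  have hsplit : ∀ i, i < L → S i = ((E (i + 1)).card : ℝ) / 2 ^ (i + 1) + S (i + 1) := by
    intro i hiL
    have h1 : insert (i + 1) (Finset.Icc (i + 1 + 1) L) = Finset.Icc (i + 1) L := by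
      rw [Finset.Icc_add_one_left_eq_Ioc (i + 1) L]
      exact Finset.Ioc_insert_left (by omega)
    have h2 : (i + 1) ∉ Finset.Icc (i + 1 + 1) L := by
      simp [Finset.mem_Icc]
    simp only [hS]
    rw [← h1, Finset.sum_insert h2]
  -- main downward induction
  have key : ∀ k i, i + k = L → ((F i).card : ℤ) ≤ ⌈(2 : ℝ) ^ i * S i⌉ := by
    intro k
    induction k with
    | zero =>
      intro i h
      have hiL : i = L := by omega
      have hS0 : Finset.Icc (i + 1) L = ∅ := Finset.Icc_eq_empty_of_lt (by omega)
      have hFi : F i = ∅ := by rw [hiL]; exact hFL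
      simp [hS, hS0, hFi]
    | succ k ih =>
      intro i h
      have hiL : i < L := by omega
      have hf : ((F (i + 1)).card : ℤ) ≤ ⌈(2 : ℝ) ^ (i + 1) * S (i + 1)⌉ := ih (i + 1) (by omega)
      set c := ⌈(2 : ℝ) ^ (i + 1) * S (i + 1)⌉ with hc
      set T := ⌈(2 : ℝ) ^ i * S i⌉ with hT
      have hnat : (F i).card ≤ ((E (i + 1)).card + (F (i + 1)).card + 1) / 2 := by
        have := hF (i + 1) (by omega) (by omega)
        simpa using this
      have h2n : 2 * (F i).card ≤ (E (i + 1)).card + (F (i + 1)).card + 1 := by omega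
      have hreal : (2 : ℝ) ^ (i + 1) * S i = ((E (i + 1)).card : ℝ) + 2 ^ (i + 1) * S (i + 1) := by
        rw [hsplit i hiL]
        have h2pos : (0 : ℝ) < 2 ^ (i + 1) := by positivity
        field_simp
      have h2T : ((E (i + 1)).card : ℤ) + c ≤ 2 * T := by
        have hTc : (2 : ℝ) ^ i * S i ≤ (T : ℤ) := Int.le_ceil _
        have h1 : ((E (i + 1)).card : ℝ) + 2 ^ (i + 1) * S (i + 1) ≤ 2 * (T : ℝ) := by
          rw [← hreal]
          have h2e : (2 : ℝ) ^ (i + 1) = 2 * 2 ^ i := by ring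
          rw [h2e]
          nlinarith [hTc]
        have h3 : (c : ℤ) ≤ 2 * T - (E (i + 1)).card := by
          rw [hc]
          apply Int.ceil_le.mpr
          push_cast
          linarith
        omega
      have h2n' : 2 * ((F i).card : ℤ) ≤ ((E (i + 1)).card : ℤ) + ((F (i + 1)).card : ℤ) + 1 := by
        exact_mod_cast h2n
      omega
  -- vnorm computation
  have hvx : vnorm x = ∑ j ∈ Finset.range (L + 1), ((E j).card : ℝ) / 2 ^ j := by
    rw [vnorm]
    rw [Finset.sum_congr rfl fun e _ => hx e]
    rw [Finset.sum_comm]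
    refine Finset.sum_congr rfl fun j _ => ?_
    rw [← Finset.sum_div]
    congr 1
    rw [hE j, Finset.card_filter]
    push_cast
    refine Finset.sum_congr rfl fun e _ => ?_
    rcases Nat.le_one_iff_eq_zero_or_eq_one.mp (hd e j) with h | h <;> simp [h]
  intro i hi
  have hSle : S i ≤ vnorm x := by
    rw [hvx, hS]
    apply Finset.sum_le_sum_of_subset_of_nonneg
    · intro j hj
      simp only [Finset.mem_Icc] at hj
      simp only [Finset.mem_range]
      omega
    · intro j _ _
      positivity
  constructor
  · have hk := key (L - i) i (by omega)
    rw [hS] at hk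
    exact_mod_cast hk
  · have h1 : ((⌈(2 : ℝ) ^ i * S i⌉ : ℤ) : ℝ) < (2 : ℝ) ^ i * S i + 1 := Int.ceil_lt_add_one _
    have h2 : (2 : ℝ) ^ i * S i ≤ 2 ^ i * vnorm x :=
      mul_le_mul_of_nonneg_left hSle (by positivity)
    simp only [hS] at h1 h2 ⊢
    linarith
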